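/- arXiv:1607.07235 — 5 statements merged into one kernel-verified Lean document; each statement's English description precedes it below -/
import Mathlib

section
/- For every n ≥ 1, W_{n+2} = U_n V_n V_n V_n V_{n−1} V_n, where juxtaposition denotes concatenation of words. -/
/-- The words `W n` over the alphabet `{1,2}`:
`W 0 = ε`, `W 1 = 1`, `W (n+2) = W (n+1) 2 W n 2 W (n+1)`. -/
def W : ℕ → List ℕ
  | 0 => []
  | 1 => [1]
  | (n+2) => W (n+1) ++ [2] ++ W n ++ [2] ++ W (n+1)

/-- `U n = W n 2 W (n-1)` (for `n ≥ 1`). -/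
def U (n : ℕ) : List ℕ := W n ++ [2] ++ W (n-1)

/-- `V n = 2 W n` (so in particular `V 0 = 2`). -/
def V (n : ℕ) : List ℕ := [2] ++ W n

/-- For every `n ≥ 1`, `W (n+2) = U n V n V n V n V (n-1) V n`. -/
theorem W_decomposition (n : ℕ) (hn : 1 ≤ n) :
    W (n+2) = U n ++ V n ++ V n ++ V n ++ V (n-1) ++ V n := by
  match n, hn with
  | 1, _ => simp [W, U, V]
  | (k+2), _ =>
    show W (k+4) = _
    simp only [U, V, W, Nat.add_sub_cancel]
    simp [List.append_assoc]
end

section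
/- For every n ≥ 1, W_{n+3} = U'_n U'_n W_{n−1} 2 W_n 2 W_{n+2}, where U'_n = W_{n+1} 2 W_n 2 and juxtaposition denotes concatenation of words. -/
/-- `U' n = W (n+1) 2 W n 2` (for `n ≥ 1`). -/
def U' (n : ℕ) : List ℕ := W (n+1) ++ [2] ++ W n ++ [2]

/-- For every `n ≥ 1`, `W (n+3) = U' n U' n W (n-1) 2 W n 2 W (n+2)`. -/
theorem W_decomposition' (n : ℕ) (hn : 1 ≤ n) :
    W (n+3) = U' n ++ U' n ++ W (n-1) ++ [2] ++ W n ++ [2] ++ W (n+2) := by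
  obtain ⟨m, rfl⟩ := Nat.exists_eq_add_of_le hn
  simp only [Nat.add_sub_cancel_left, Nat.add_sub_cancel, show 1 + m + 3 = m + 4 by ring,
    show 1 + m + 2 = m + 3 by ring, show 1 + m + 1 = m + 2 by ring,
    show 1 + m = m + 1 by ring, U', W, List.append_assoc]
end

section
/- Define words F_n, G_n, H_n by (F_1, G_1, H_1) = (ε, U_1, V_1) and, for n ≥ 2, F_n = 2W_1 2W_2 ⋯ 2W_{n−1}, H_n = 2 G_{n−1}, G_n = U_{n−1} H_{n−1}. Then for every n ≥ 1: U_n = G_n F_n, V_n = H_n F_n, the words G_n and H_n are nonempty, and the last letter of G_n is different from the last letter of H_n. -/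
/-- `F 1 = ε` and `F n = 2 W 1 2 W 2 ⋯ 2 W (n-1)` for `n ≥ 2`. -/
def F : ℕ → List ℕ
  | 0 => []
  | 1 => []
  | (n+2) => F (n+1) ++ [2] ++ W (n+1)

/-- `G 1 = U 1`, and `G n = U (n-1) H (n-1)` for `n ≥ 2`,
where `H 1 = V 1` and `H n = 2 G (n-1)` for `n ≥ 2`. -/
def G : ℕ → List ℕ
  | 0 => []
  | 1 => U 1
  | 2 => U 1 ++ V 1
  | (n+3) => U (n+2) ++ ([2] ++ G (n+1))

/-- `H 1 = V 1` and `H n = 2 G (n-1)` for `n ≥ 2`. -/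
def H : ℕ → List ℕ
  | 0 => []
  | 1 => V 1
  | (n+2) => [2] ++ G (n+1)

lemma main : ∀ n : ℕ,
    (U (n+1) = G (n+1) ++ F (n+1) ∧ V (n+1) = H (n+1) ++ F (n+1)) ∧
    (U (n+2) = G (n+2) ++ F (n+2) ∧ V (n+2) = H (n+2) ++ F (n+2)) := by
  intro n
  induction n with
  | zero => constructor <;> constructor <;> rfl
  | succ n ih =>
    obtain ⟨⟨ih1, _⟩, ⟨ih3, ih4⟩⟩ := ih
    refine ⟨⟨ih3, ih4⟩, ?_, ?_⟩
    · have h1 : ∀ l : List ℕ, G (n+1) ++ (F (n+1) ++ l) = U (n+1) ++ l := by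
        intro l; rw [← List.append_assoc, ← ih1]
      simp [U, V, G, F, W, List.append_assoc, h1]
    · have h2 : ∀ l : List ℕ, G (n+2) ++ (F (n+2) ++ l) = U (n+2) ++ l := by
        intro l; rw [← List.append_assoc, ← ih3]
      have h2' : ∀ l : List ℕ,
          G (n+1+1) ++ (F (n+1) ++ 2 :: (W (n+1) ++ l)) = U (n+2) ++ l := by
        intro l; have := h2 l; simpa [F, List.append_assoc] using this
      simp [U, V, H, G, F, W, List.append_assoc, h2']

lemma G_succ (n : ℕ) : G (n+2) = U (n+1) ++ H (n+1) := by
  cases n <;> rfl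

lemma lasts : ∀ n : ℕ, G (n+1) ≠ [] ∧ H (n+1) ≠ [] ∧
    (G (n+1)).getLast? ≠ (H (n+1)).getLast? := by
  intro n
  induction n with
  | zero => refine ⟨?_, ?_, ?_⟩ <;> decide
  | succ n ih =>
    obtain ⟨hG, hH, hne⟩ := ih
    have e1 : (G (n+2)).getLast? = (H (n+1)).getLast? := by
      rw [G_succ, List.getLast?_append_of_ne_nil _ hH]
    have e2 : (H (n+2)).getLast? = (G (n+1)).getLast? := by
      show (([2] : List ℕ) ++ G (n+1)).getLast? = _
      rw [List.getLast?_append_of_ne_nil _ hG]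
    refine ⟨?_, ?_, ?_⟩
    · rw [G_succ]; simp [hH]
    · show ([2] : List ℕ) ++ G (n+1) ≠ []; simp
    · rw [e1, e2]; exact fun h => hne h.symm

/-- For every `n ≥ 1`: `U n = G n F n`, `V n = H n F n`, the words `G n` and `H n`
are nonempty, and the last letter of `G n` differs from the last letter of `H n`. -/
theorem UV_factorization (n : ℕ) (hn : 1 ≤ n) :
    U n = G n ++ F n ∧ V n = H n ++ F n ∧
    G n ≠ [] ∧ H n ≠ [] ∧ (G n).getLast? ≠ (H n).getLast? := by
  obtain ⟨m, rfl⟩ : ∃ m, n = m + 1 := ⟨n - 1, (Nat.succ_pred_eq_of_pos hn).symm⟩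
  obtain ⟨h1, h2⟩ := (main m).1
  obtain ⟨h3, h4, h5⟩ := lasts m
  exact ⟨h1, h2, h3, h4, h5⟩
end

section
/- There exists a sequence (I_n)_{n≥0} of nonempty finite words over {1,2} with I_0 = 1 and I_1 = 21, such that for every n ≥ 1: V_{n−1} V_n = 2 J_n I_n, V_n = 2 J_n I_{n−1}, and the first letter of I_n is different from the first letter of I_{n−1}. -/
def J : ℕ → List ℕ
  | 0 => []
  | 1 => []
  | (n+2) => W (n+1) ++ [2] ++ J (n+1)

private def I' : ℕ → List ℕ
  | 0 => [1]
  | 1 => [2, 1]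
  | (n+2) => I' n ++ [2] ++ W n ++ [2] ++ W (n+1)

private lemma I'_ne (n : ℕ) : I' n ≠ [] := by
  match n with
  | 0 => simp [I']
  | 1 => simp [I']
  | (n+2) => simp [I']

private lemma key : ∀ n, J (n+1) ++ I' n = W (n+1)
  | 0 => by simp [J, I', W]
  | 1 => by simp [J, I', W]
  | (n+2) => by
    have h1 := key n
    show (W (n+2) ++ [2] ++ J (n+2)) ++ (I' n ++ [2] ++ W n ++ [2] ++ W (n+1)) = W (n+3)
    have hJ : J (n+2) = W (n+1) ++ [2] ++ J (n+1) := rfl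
    have hW3 : W (n+3) = W (n+2) ++ [2] ++ W (n+1) ++ [2] ++ W (n+2) := rfl
    have hW2 : W (n+2) = W (n+1) ++ [2] ++ W n ++ [2] ++ W (n+1) := rfl
    rw [hJ, hW3, hW2, ← h1]
    simp

private lemma cond1 : ∀ n, J (n+1) ++ I' (n+1) = W n ++ [2] ++ W (n+1)
  | 0 => by simp [J, I', W]
  | (m+1) => by
    have h1 := key m
    show (W (m+1) ++ [2] ++ J (m+1)) ++ (I' m ++ [2] ++ W m ++ [2] ++ W (m+1))
        = W (m+1) ++ [2] ++ W (m+2)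
    have hW2 : W (m+2) = W (m+1) ++ [2] ++ W m ++ [2] ++ W (m+1) := rfl
    rw [hW2, ← h1]
    simp

private lemma head_step (n : ℕ) : (I' (n+2)).head? = (I' n).head? := by
  show (I' n ++ [2] ++ W n ++ [2] ++ W (n+1)).head? = (I' n).head?
  rcases List.exists_cons_of_ne_nil (I'_ne n) with ⟨a, t, h⟩
  simp [h]

private lemma head_ne : ∀ n, (I' (n+1)).head? ≠ (I' n).head?
  | 0 => by simp [I']
  | (n+1) => by
    rw [head_step n]
    exact fun h => head_ne n h.symm

/-- There exists a sequence `(I n)` of nonempty finite words over `{1,2}` with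
`I 0 = 1` and `I 1 = 21`, such that for every `n ≥ 1`:
`V (n-1) V n = 2 J n I n`, `V n = 2 J n I (n-1)`, and the first letter of `I n`
differs from the first letter of `I (n-1)`. -/
theorem exists_I :
    ∃ I : ℕ → List ℕ,
      (∀ n, I n ≠ []) ∧ I 0 = [1] ∧ I 1 = [2, 1] ∧
      ∀ n : ℕ, 1 ≤ n →
        V (n-1) ++ V n = [2] ++ J n ++ I n ∧
        V n = [2] ++ J n ++ I (n-1) ∧
        (I n).head? ≠ (I (n-1)).head? := by
  refine ⟨I', I'_ne, rfl, rfl, ?_⟩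
  rintro n hn
  obtain ⟨m, rfl⟩ := Nat.exists_eq_add_of_le' hn
  simp only [Nat.add_sub_cancel] at *
  refine ⟨?_, ?_, ?_⟩
  · show ([2] ++ W m) ++ ([2] ++ W (m+1)) = [2] ++ J (m+1) ++ I' (m+1)
    have h := cond1 m
    simp only [List.append_assoc] at h ⊢
    rw [← h]
  · show [2] ++ W (m+1) = [2] ++ J (m+1) ++ I' m
    simp [← key m]
  · exact head_ne m
end

section
/- (Lemma 2) For every n ≥ 1, with R'_n = φ(U'_n) and S'_n = T^{3ℓ_n+ℓ_{n−1}+4} − 1, one has v(θ − R'_n(X^{-1})/S'_n(X^{-1})) = 2(3ℓ_n + ℓ_{n−1} + 4) + (ℓ_n + ℓ_{n−1} + 1)/2; equivalently, |θ − R'_n/S'_n| = |S'_n|^{−ω'_n} where ω'_n = 2 + (ℓ_n + ℓ_{n−1} + 1)/(6ℓ_n + 2ℓ_{n−1} + 8). -/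
/-- `ℓ n` is the length of the word `W n`. -/
def ell (n : ℕ) : ℕ := (W n).length

/-- `w n` is the `n`-th letter (for `n ≥ 1`) of the common infinite extension of
the words `W n` (each `W n` being a prefix of `W (n+1)`, and `ℓ n ≥ n`). -/
def w (n : ℕ) : ℕ := (W n).getD (n-1) 0

/-- `θ = ∑_{n ≥ 1} w(n) Xⁿ`, as a formal Laurent series over `ℚ`. -/
noncomputable def theta : LaurentSeries ℚ :=
  ((PowerSeries.mk fun n => if n = 0 then 0 else (w n : ℚ)) : PowerSeries ℚ)

/-- A polynomial `P ∈ ℚ[T]` regarded as the element `P(X⁻¹)` of `ℚ((X))`. -/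
noncomputable def evalTinv (P : Polynomial ℚ) : LaurentSeries ℚ :=
  Polynomial.aeval (((PowerSeries.X : PowerSeries ℚ) : LaurentSeries ℚ))⁻¹ P

/-- `φ(M) = m₁ T^(k-1) + m₂ T^(k-2) + ⋯ + m_k ∈ ℚ[T]` for a word `M = m₁ m₂ ⋯ m_k`. -/
noncomputable def phi (M : List ℕ) : Polynomial ℚ :=
  M.foldl (fun acc m => acc * Polynomial.X + Polynomial.C (m : ℚ)) 0

/-- `R' n = φ(U' n) ∈ ℚ[T]`. -/
noncomputable def R' (n : ℕ) : Polynomial ℚ := phi (U' n)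

/-- `S' n = T^(3 ℓ n + ℓ (n-1) + 4) - 1 ∈ ℚ[T]`. -/
noncomputable def S' (n : ℕ) : Polynomial ℚ :=
  Polynomial.X ^ (3 * ell n + ell (n-1) + 4) - 1

-- Auxiliary lemmas

lemma W_rec (n : ℕ) : W (n+2) = W (n+1) ++ [2] ++ W n ++ [2] ++ W (n+1) := rfl

lemma ell_rec (n : ℕ) : ell (n+2) = 2 * ell (n+1) + ell n + 2 := by
  simp [ell, W_rec]; ring

lemma ell_zero : ell 0 = 0 := rfl
lemma ell_one : ell 1 = 1 := rfl

lemma W_prefix : ∀ n, W n <+: W (n+1)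
  | 0 => ⟨W 1, by simp [W]⟩
  | 1 => ⟨[2,2,1], rfl⟩
  | (n+2) => by
      rw [W_rec (n+1)]
      refine ⟨[2] ++ W (n+1) ++ [2] ++ W (n+2), ?_⟩
      simp [W_rec]

lemma W_prefix_le {m k : ℕ} (h : m ≤ k) : W m <+: W k := by
  induction k with
  | zero => simpa [Nat.le_zero.mp h] using List.prefix_refl _
  | succ k ih =>
    rcases Nat.lt_or_ge m (k+1) with h'|h'
    · exact (ih (by omega)).trans (W_prefix k)
    · have : m = k + 1 := by omega
      subst this; exact List.prefix_refl _

lemma ell_ge : ∀ n, n ≤ ell n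
  | 0 => le_refl _
  | 1 => le_refl _
  | (n+2) => by have h := ell_ge (n+1); rw [ell_rec]; omega

lemma ell_mono {m k : ℕ} (h : m ≤ k) : ell m ≤ ell k := (W_prefix_le h).length_le

lemma prefix_getD {u v : List ℕ} (h : u <+: v) {i : ℕ} (hi : i < u.length) :
    v.getD i 0 = u.getD i 0 := by
  rw [List.getD_eq_getElem _ _ hi, List.getD_eq_getElem _ _ (hi.trans_le h.length_le)]
  exact (h.getElem hi).symm

lemma w_eq {k m : ℕ} (hk : 1 ≤ k) (h : k ≤ ell m) : w k = (W m).getD (k-1) 0 := by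
  have h1 : k - 1 < ell k := by have := ell_ge k; omega
  rcases Nat.le_total k m with hkm | hmk
  · exact (prefix_getD (W_prefix_le hkm) h1).symm
  · exact prefix_getD (W_prefix_le hmk) (show k - 1 < (W m).length by
      show k - 1 < ell m; omega)

lemma ell_def (n : ℕ) : (W n).length = ell n := rfl

lemma pre_mid {u v w₂ : List ℕ} (h : u <+: v) : w₂ ++ u <+: w₂ ++ v := by
  obtain ⟨t, rfl⟩ := h; exact ⟨t, by simp⟩

/-- The key combinatorial lemma. -/
lemma keyG : ∀ n, 1 ≤ n → ∃ (C : List ℕ) (x y : ℕ),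
    2 * (C.length + 1) = ell n + ell (n-1) + 1 ∧ x ≠ y ∧
    C ++ [x] <+: W (n-1) ++ [2] ++ W n ∧ C ++ [y] <+: W n ++ [2] ++ W (n-1) := by
  intro n hn
  induction n with
  | zero => omega
  | succ m ih =>
    rcases Nat.eq_or_lt_of_le hn with h1 | h1
    · -- n = 1
      refine ⟨[], 2, 1, by simp [← h1, ell_one, ell_zero], by norm_num, ?_, ?_⟩
      · simp [← h1]; exact ⟨[1], rfl⟩
      · simp [← h1]; exact ⟨[2], rfl⟩
    · have hm : 1 ≤ m := by omega
      obtain ⟨C, x, y, hlen, hxy, hx, hy⟩ := ih hm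
      -- n = m+1, use W (m+1) = W m ++ [2] ++ W (m-1) ++ [2] ++ W m
      obtain ⟨k, rfl⟩ : ∃ k, m = k + 1 := ⟨m - 1, by omega⟩
      refine ⟨W (k+1) ++ [2] ++ C, y, x, ?_, hxy.symm, ?_, ?_⟩
      · simp only [List.length_append, List.length_singleton]
        have : ell (k+2) = 2 * ell (k+1) + ell k + 2 := ell_rec k
        simp only [Nat.add_sub_cancel] at hlen ⊢
        show 2 * (ell (k+1) + 1 + C.length + 1) = ell (k+2) + ell (k+1) + 1
        omega
      · -- (W (k+1) ++ [2] ++ C) ++ [y] <+: W (m) ++ [2] ++ W (m+1),  m = k+1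
        simp only [Nat.add_sub_cancel]
        rw [W_rec k]
        -- target: ... <+: W (k+1) ++ [2] ++ (W (k+1) ++ [2] ++ W k ++ [2] ++ W (k+1))
        have h2 : C ++ [y] <+: W (k+1) ++ [2] ++ W k ++ [2] ++ W (k+1) := by
          simp only [Nat.add_sub_cancel] at hy
          exact hy.trans ⟨[2] ++ W (k+1), by simp⟩
        have := pre_mid (w₂ := W (k+1) ++ [2]) h2
        simpa [List.append_assoc] using this
      · simp only [Nat.add_sub_cancel]
        rw [W_rec k]
        have h2 : C ++ [x] <+: W k ++ [2] ++ W (k+1) ++ [2] ++ W (k+1) := by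
          simp only [Nat.add_sub_cancel] at hx
          exact hx.trans ⟨[2] ++ W (k+1), by simp⟩
        have := pre_mid (w₂ := W (k+1) ++ [2]) h2
        simpa [List.append_assoc] using this

lemma getD_tri {u : List ℕ} {i : ℕ} (h : i < 3 * u.length) :
    (u ++ u ++ u).getD i 0 = u.getD (i % u.length) 0 := by
  have hL : 0 < u.length := by by_contra h'; omega
  rcases Nat.lt_or_ge i u.length with h1 | h1
  · rw [Nat.mod_eq_of_lt h1, List.getD_append _ _ _ _ (by simp; omega)]
    rw [List.getD_append _ _ _ _ h1]
  rcases Nat.lt_or_ge i (2 * u.length) with h2 | h2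
  · have : i % u.length = i - u.length := by
      rw [Nat.mod_eq_sub_mod h1, Nat.mod_eq_of_lt (by omega)]
    rw [this, List.getD_append _ _ _ _ (by simp; omega),
        List.getD_append_right _ _ _ _ h1]
  · have : i % u.length = i - 2 * u.length := by
      rw [Nat.mod_eq_sub_mod h1, Nat.mod_eq_sub_mod (by omega), Nat.mod_eq_of_lt (by omega)]
      omega
    rw [this, List.getD_append_right _ _ _ _ (by simp; omega)]
    congr 1
    simp; omega

lemma main_words (n : ℕ) (hn : 1 ≤ n) :
    ∃ d x y : ℕ, x ≠ y ∧
      2 * d = 4 * (3 * ell n + ell (n-1) + 4) + (ell n + ell (n-1) + 1) ∧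
      (∀ k, 1 ≤ k → k < d → w k = (U' n).getD ((k-1) % (3 * ell n + ell (n-1) + 4)) 0) ∧
      w d = x ∧ (U' n).getD ((d-1) % (3 * ell n + ell (n-1) + 4)) 0 = y := by
  obtain ⟨k, rfl⟩ : ∃ k, n = k + 1 := ⟨n - 1, by omega⟩
  simp only [Nat.add_sub_cancel]
  obtain ⟨C, x, y, hlen, hxy, hx, hy⟩ := keyG (k+1) (by omega)
  simp only [Nat.add_sub_cancel] at hlen hx hy
  set L : ℕ := 3 * ell (k+1) + ell k + 4 with hL
  have e2 : ell (k+2) = 2 * ell (k+1) + ell k + 2 := ell_rec k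
  have e3 : ell (k+3) = 2 * ell (k+2) + ell (k+1) + 2 := ell_rec (k+1)
  have e4 : ell (k+4) = 2 * ell (k+3) + ell (k+2) + 2 := ell_rec (k+2)
  have hUlen : (U' (k+1)).length = L := by
    simp [U', List.length_append, ell_def]
    have h22 : ell (k+1+1) = ell (k+2) := rfl
    omega
  set Cf : List ℕ := W (k+3) ++ [2] ++ W (k+1) ++ [2] ++ C with hCf
  have hCfl : Cf.length = ell (k+3) + ell (k+1) + 2 + C.length := by
    simp [hCf, List.length_append, ell_def]
    omega
  set d : ℕ := Cf.length + 1 with hd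
  -- prefix into W (k+4)
  have eW : W (k+4) = (W (k+3) ++ [2] ++ W (k+1) ++ [2]) ++
      ((W k ++ [2] ++ W (k+1)) ++ ([2] ++ W (k+3))) := by
    simp [W_rec, List.append_assoc]
  have hxW : Cf ++ [x] <+: W (k+4) := by
    rw [eW]
    have : C ++ [x] <+: (W k ++ [2] ++ W (k+1)) ++ ([2] ++ W (k+3)) :=
      hx.trans (List.prefix_append _ _)
    have := pre_mid (w₂ := W (k+3) ++ [2] ++ W (k+1) ++ [2]) this
    simpa [hCf, List.append_assoc] using this
  have eU : U' (k+1) ++ U' (k+1) ++ U' (k+1) = (W (k+3) ++ [2] ++ W (k+1) ++ [2]) ++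
      ((W (k+1) ++ [2] ++ W k) ++ ([2] ++ W (k+1) ++ [2] ++ W (k+1) ++ [2])) := by
    simp [U', W_rec, List.append_assoc]
  have hyU : Cf ++ [y] <+: U' (k+1) ++ U' (k+1) ++ U' (k+1) := by
    rw [eU]
    have : C ++ [y] <+: (W (k+1) ++ [2] ++ W k) ++ ([2] ++ W (k+1) ++ [2] ++ W (k+1) ++ [2]) :=
      hy.trans (List.prefix_append _ _)
    have := pre_mid (w₂ := W (k+3) ++ [2] ++ W (k+1) ++ [2]) this
    simpa [hCf, List.append_assoc] using this
  have hdW : d ≤ ell (k+4) := by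
    have := hxW.length_le
    simpa [hd, ell] using this
  have hdU : d ≤ 3 * L := by
    have := hyU.length_le
    simp [List.length_append, hUlen] at this
    omega
  refine ⟨d, x, y, hxy, ?_, ?_, ?_, ?_⟩
  · omega
  · intro j hj1 hjd
    have h1 : w j = (W (k+4)).getD (j-1) 0 := w_eq hj1 (by omega)
    have h2 : (W (k+4)).getD (j-1) 0 = Cf.getD (j-1) 0 := by
      have := prefix_getD (hxW.trans (List.prefix_refl _)) (i := j-1)
        (by simp [List.length_append] <;> omega)
      rw [this, List.getD_append _ _ _ _ (by omega)]
    have h3 : (U' (k+1) ++ U' (k+1) ++ U' (k+1)).getD (j-1) 0 = Cf.getD (j-1) 0 := by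
      rw [prefix_getD hyU (i := j-1) (by simp [List.length_append] <;> omega),
        List.getD_append _ _ _ _ (by omega)]
    have h4 : (U' (k+1) ++ U' (k+1) ++ U' (k+1)).getD (j-1) 0
        = (U' (k+1)).getD ((j-1) % L) 0 := by
      rw [getD_tri (by rw [hUlen]; omega), hUlen]
    rw [h1, h2, ← h3, h4]
  · have h1 : w d = (W (k+4)).getD (d-1) 0 := w_eq (by omega) (by omega)
    rw [h1, prefix_getD hxW (i := d-1) (by simp [List.length_append] <;> omega),
      List.getD_append_right _ _ _ _ (by omega)]
    simp [hd]
  · rw [← hUlen] at hdU ⊢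
    rw [← getD_tri (by omega),
      prefix_getD hyU (i := d-1) (by simp [List.length_append] <;> omega),
      List.getD_append_right _ _ _ _ (by omega)]
    simp [hd]

noncomputable def QQ (M : List ℕ) : PowerSeries ℚ :=
  PowerSeries.mk fun i => if 1 ≤ i then ((M.getD (i-1) 0 : ℕ) : ℚ) else 0

lemma phi_concat (M : List ℕ) (a : ℕ) :
    phi (M ++ [a]) = phi M * Polynomial.X + Polynomial.C (a : ℚ) := by
  simp [phi, List.foldl_append]

lemma Xinv_eq : (((PowerSeries.X : PowerSeries ℚ) : LaurentSeries ℚ))⁻¹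
    = HahnSeries.single (-1 : ℤ) 1 := by
  rw [PowerSeries.coe_X]
  symm
  apply eq_inv_of_mul_eq_one_right
  rw [HahnSeries.single_mul_single]
  norm_num [HahnSeries.single_zero_one]

lemma key_phi : ∀ M : List ℕ,
    (HahnSeries.single (M.length : ℤ) 1) * evalTinv (phi M) = ((QQ M : PowerSeries ℚ) : LaurentSeries ℚ) := by
  intro M
  induction M using List.reverseRecOn with
  | nil =>
    have h0 : QQ [] = 0 := by
      ext i
      simp [QQ, PowerSeries.coeff_mk, List.getD]
    simp [phi, evalTinv, h0]
  | append_singleton M a ih =>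
    have hQ : QQ (M ++ [a]) = QQ M + PowerSeries.C (a : ℚ) * PowerSeries.X ^ (M.length + 1) := by
      ext i
      simp only [QQ, PowerSeries.coeff_mk, map_add, PowerSeries.coeff_C_mul,
        PowerSeries.coeff_X_pow]
      rcases Nat.lt_or_ge i 1 with h1 | h1
      · interval_cases i; simp
      rcases Nat.lt_trichotomy (i-1) M.length with h2 | h2 | h2
      · have l1 : (M ++ [a]).getD (i-1) 0 = M.getD (i-1) 0 := List.getD_append M [a] 0 (i-1) h2
        rw [l1, if_neg (show ¬ i = M.length + 1 by omega)]
        ring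
      · have l1 : (M ++ [a]).getD (i-1) 0 = [a].getD (i-1-M.length) 0 :=
          List.getD_append_right M [a] 0 (i-1) (by omega)
        have l2 : i - 1 - M.length = 0 := by omega
        have l3 : M.getD (i-1) 0 = 0 := List.getD_eq_default M 0 (by omega)
        rw [l1, l2, l3, if_pos (show i = M.length + 1 by omega)]
        simp
        intro h
        exact absurd h (by omega)
      · have l1 : (M ++ [a]).getD (i-1) 0 = 0 := List.getD_eq_default _ 0 (by simp; omega)
        have l3 : M.getD (i-1) 0 = 0 := List.getD_eq_default M 0 (by omega)
        rw [l1, l3, if_neg (show ¬ i = M.length + 1 by omega)]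
        simp
    rw [phi_concat]
    rw [show evalTinv (phi M * Polynomial.X + Polynomial.C (a:ℚ))
        = evalTinv (phi M) * HahnSeries.single (-1 : ℤ) 1 + HahnSeries.single (0:ℤ) (a:ℚ) by
      have hA : (algebraMap ℚ (LaurentSeries ℚ)) ((a:ℕ):ℚ) = HahnSeries.single (0:ℤ) ((a:ℕ):ℚ) := by
        rw [map_natCast, ← map_natCast (HahnSeries.C : ℚ →+* HahnSeries ℤ ℚ) a,
          HahnSeries.C_apply]
      simp only [evalTinv, map_add, map_mul, Polynomial.aeval_X, Polynomial.aeval_C, Xinv_eq, hA]]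
    rw [hQ]
    push_cast [PowerSeries.coe_mul, PowerSeries.coe_C, PowerSeries.coe_pow, PowerSeries.coe_X]
    rw [← ih]
    rw [mul_add]
    have e1 : (HahnSeries.single ((M.length : ℤ) + 1) (1:ℚ)) *
        (evalTinv (phi M) * HahnSeries.single (-1 : ℤ) 1)
        = HahnSeries.single (M.length : ℤ) 1 * evalTinv (phi M) := by
      rw [mul_comm (evalTinv (phi M)) _, ← mul_assoc, HahnSeries.single_mul_single]
      norm_num
    have e2 : (HahnSeries.single ((M.length : ℤ) + 1) (1:ℚ)) * HahnSeries.single (0:ℤ) (a:ℚ)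
        = HahnSeries.C (a:ℚ) * (HahnSeries.single (1:ℤ) 1) ^ (M.length + 1) := by
      rw [HahnSeries.single_pow, HahnSeries.single_mul_single, HahnSeries.C_apply,
        HahnSeries.single_mul_single]
      norm_num
    rw [List.length_append, List.length_singleton]
    push_cast
    rw [e1, e2]

lemma order_eq_of (F : PowerSeries ℚ) (d : ℕ)
    (h0 : ∀ k : ℕ, k < d → PowerSeries.coeff k F = 0)
    (hd : PowerSeries.coeff d F ≠ 0) :
    ((F : LaurentSeries ℚ)).order = (d : ℤ) := by
  have hcoef : (F : LaurentSeries ℚ).coeff (d : ℤ) ≠ 0 := by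
    rw [PowerSeries.coeff_coe]
    simpa using hd
  have hfne : (F : LaurentSeries ℚ) ≠ 0 := fun h => hcoef (by rw [h]; simp)
  have hord_le := HahnSeries.order_le_of_coeff_ne_zero hcoef
  refine le_antisymm hord_le ?_
  by_contra h
  push_neg at h
  apply HahnSeries.coeff_order_eq_zero.not.2 hfne
  rw [PowerSeries.coeff_coe]
  split_ifs with hneg
  · rfl
  · push_neg at hneg
    apply h0
    omega

/-- (Lemma 2) For every `n ≥ 1`,
`v(θ - R' n(X⁻¹)/S' n(X⁻¹)) = 2 (3 ℓ n + ℓ (n-1) + 4) + (ℓ n + ℓ (n-1) + 1)/2`, i.e.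
`|θ - R'ₙ/S'ₙ| = |S'ₙ|^(-ω'ₙ)` with `ω'ₙ = 2 + (ℓ n + ℓ (n-1) + 1)/(6 ℓ n + 2 ℓ (n-1) + 8)`. -/
theorem lemma2 (n : ℕ) (hn : 1 ≤ n) :
    (theta - evalTinv (R' n) / evalTinv (S' n)).order =
      ((2 * (3 * ell n + ell (n-1) + 4) + (ell n + ell (n-1) + 1) / 2 : ℕ) : ℤ) := by
  set L : ℕ := 3 * ell n + ell (n-1) + 4 with hLdef
  have hL4 : 4 ≤ L := by omega
  have hUlen : (U' n).length = L := by
    obtain ⟨k, rfl⟩ : ∃ k, n = k + 1 := ⟨n - 1, by omega⟩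
    have := ell_rec k
    simp [U', List.length_append, ell_def]
    have h22 : ell (k+1+1) = ell (k+2) := rfl
    simp only [hLdef, Nat.add_sub_cancel]
    omega
  -- the periodic power series
  set pS : PowerSeries ℚ :=
    PowerSeries.mk (fun i => if 1 ≤ i then (((U' n).getD ((i-1) % L) 0 : ℕ) : ℚ) else 0) with hpS
  -- pS * (1 - X^L) = QQ (U' n)
  have claim1 : pS * (1 - PowerSeries.X ^ L) = QQ (U' n) := by
    ext i
    rw [mul_sub, mul_one, map_sub, PowerSeries.coeff_mul_X_pow']
    simp only [hpS, QQ, PowerSeries.coeff_mk]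
    split_ifs with h1 h2 h3 h4 h5
    · have e1 : (i-1) % L = (i-L-1) % L := by
        rw [Nat.mod_eq_sub_mod (by omega)]; congr 1; omega
      have e2 : (U' n).getD (i-1) 0 = 0 := List.getD_eq_default _ _ (by rw [hUlen]; omega)
      rw [e1, e2, sub_self]
      norm_num
    · have e1 : (i-1) % L = i - 1 := Nat.mod_eq_of_lt (by omega)
      rw [e1]; ring
    · have e1 : (i-1) % L = i - 1 := Nat.mod_eq_of_lt (by omega)
      rw [e1]; ring
    · exfalso; omega
    · norm_num
    · norm_num
  -- evalTinv (S' n) = single (-L) 1 - 1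
  have claim2 : evalTinv (S' n) = HahnSeries.single (-(L:ℤ)) 1 - 1 := by
    simp only [evalTinv, S', map_sub, map_pow, map_one, Polynomial.aeval_X, Xinv_eq,
      HahnSeries.single_pow, one_pow, ← hLdef]
    congr 2
    simp
  have claim3 : evalTinv (S' n) ≠ 0 := by
    rw [claim2]
    intro h
    have := congrArg (fun f => HahnSeries.coeff f (-(L:ℤ))) h
    simp only [HahnSeries.coeff_sub, HahnSeries.coeff_single_same, HahnSeries.coeff_zero] at this
    rw [show ((1:LaurentSeries ℚ)) = HahnSeries.single (0:ℤ) 1 from HahnSeries.single_zero_one.symm,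
      HahnSeries.coeff_single_of_ne (by omega)] at this
    norm_num at this
  -- evalTinv (R' n) = pS * evalTinv (S' n)
  have claim4 : evalTinv (R' n) = (pS : LaurentSeries ℚ) * evalTinv (S' n) := by
    have hk := key_phi (U' n)
    rw [hUlen] at hk
    have hunit : HahnSeries.single (-(L:ℤ)) (1:ℚ) * HahnSeries.single ((L:ℤ)) 1 = 1 := by
      rw [HahnSeries.single_mul_single]
      norm_num [HahnSeries.single_zero_one]
    have : evalTinv (R' n) = HahnSeries.single (-(L:ℤ)) 1 * ((QQ (U' n) : PowerSeries ℚ) : LaurentSeries ℚ) := by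
      rw [← hk, ← mul_assoc, hunit, one_mul, R']
    have hco : ((1 - PowerSeries.X ^ L : PowerSeries ℚ) : LaurentSeries ℚ)
        = 1 - HahnSeries.single ((L:ℤ)) 1 := by
      rw [PowerSeries.coe_sub, PowerSeries.coe_one, PowerSeries.coe_pow, PowerSeries.coe_X,
        HahnSeries.single_pow]
      norm_num
    rw [this, ← claim1, PowerSeries.coe_mul, claim2, hco]
    have hunit2 : HahnSeries.single (-(L:ℤ)) (1:ℚ) * HahnSeries.single ((L:ℤ)) 1 = 1 := by
      rw [HahnSeries.single_mul_single]
      norm_num [HahnSeries.single_zero_one]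
    linear_combination (-((pS : PowerSeries ℚ) : LaurentSeries ℚ)) * hunit2
  -- reduce to power series difference
  have hdiv : theta - evalTinv (R' n) / evalTinv (S' n)
      = ((((PowerSeries.mk fun i => if i = 0 then 0 else (w i : ℚ)) - pS : PowerSeries ℚ)) : LaurentSeries ℚ) := by
    rw [claim4, mul_div_assoc, div_self claim3, mul_one, PowerSeries.coe_sub, theta]
  obtain ⟨d, x, y, hxy, hdd, hagree, hwd, hud⟩ := main_words n hn
  have hd1 : 1 ≤ d := by omega
  set F : PowerSeries ℚ := (PowerSeries.mk fun i => if i = 0 then 0 else (w i : ℚ)) - pS with hF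
  have hFd : (PowerSeries.coeff d) F ≠ 0 := by
    simp only [hF, map_sub, PowerSeries.coeff_mk, hpS]
    rw [if_neg (by omega), if_pos hd1, hwd, hud]
    intro h
    have : (x:ℚ) = y := by linarith [sub_eq_zero.mp h]
    exact hxy (by exact_mod_cast this)
  have hFk : ∀ k : ℕ, k < d → (PowerSeries.coeff k) F = 0 := by
    intro k hk
    simp only [hF, map_sub, PowerSeries.coeff_mk, hpS]
    rcases Nat.lt_or_ge k 1 with h1 | h1
    · interval_cases k; simp
    · rw [if_neg (by omega), if_pos h1, hagree k h1 hk]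
      ring
  rw [hdiv, order_eq_of F d hFk hFd]
  congr 1
  omega
end
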